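/- Let π be a PMF on a countable set S, let O and L partition the coordinates so that π factors as π(o, l), and let ψ be a PMF on the O-marginal's domain with finite support contained in the support of the marginal π_O. Then the KL divergence gradient identity holds in the finite discrete setting: for a parameterized family π_θ(y) = f_θ(y)h(y)/Z_θ with Z_θ = ∑_y f_θ(y)h(y) and f_θ(y) = exp(θ·T(y))·r(y), one has ∂/∂θ D_KL(ψ ∥ (π_θ)_O) = E_{Y∼π_θ}[T(Y)] − E_{O∼ψ, L∼π_θ(·|O)}[T(O,L)], provided S is finite. -/

import Mathlib

open Real Finset

/-- contrastive-Hebbian KL gradient identity for a finite exponential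
family π_θ(y) ∝ exp(θ·T(y)) r(y) h(y) with observed/latent split S = O × L:
∂/∂θ D_KL(ψ ∥ (π_θ)_O) = E_{Y∼π_θ}[T(Y)] − E_{O∼ψ, L∼π_θ(·|O)}[T(O,L)]. -/
theorem stmt_19 {O L : Type*} [Fintype O] [Fintype L] [Nonempty O] [Nonempty L]
    (T : O × L → ℝ) (h r : O × L → ℝ) (hh : ∀ y, 0 < h y) (hr : ∀ y, 0 < r y)
    (ψ : O → ℝ) (hψ0 : ∀ o, 0 ≤ ψ o) (hψ1 : ∑ o, ψ o = 1)
    (pi_ : ℝ → O × L → ℝ)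
    (hpi : ∀ (θ : ℝ) (y : O × L),
      pi_ θ y = Real.exp (θ * T y) * r y * h y
        / ∑ z : O × L, Real.exp (θ * T z) * r z * h z)
    (marg : ℝ → O → ℝ) (hmarg : ∀ θ o, marg θ o = ∑ l, pi_ θ (o, l))
    (θ₀ : ℝ) :
    HasDerivAt (fun θ : ℝ => ∑ o, ψ o * Real.log (ψ o / marg θ o))
      ((∑ y : O × L, pi_ θ₀ y * T y)
        - ∑ o, ψ o * ∑ l, (pi_ θ₀ (o, l) / marg θ₀ o) * T (o, l)) θ₀ := by
  classical
  set Z : ℝ → ℝ := fun θ => ∑ z : O × L, Real.exp (θ * T z) * r z * h z with hZdef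
  set g : O → ℝ → ℝ := fun o θ => ∑ l, Real.exp (θ * T (o, l)) * r (o, l) * h (o, l) with hgdef
  have hZpos : ∀ θ, 0 < Z θ := fun θ =>
    Finset.sum_pos (fun z _ => mul_pos (mul_pos (Real.exp_pos _) (hr z)) (hh z)) Finset.univ_nonempty
  have hgpos : ∀ o θ, 0 < g o θ := fun o θ =>
    Finset.sum_pos (fun l _ => mul_pos (mul_pos (Real.exp_pos _) (hr _)) (hh _)) Finset.univ_nonempty
  have hmargg : ∀ θ o, marg θ o = g o θ / Z θ := by
    intro θ o
    rw [hmarg]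
    simp only [hpi]
    rw [← Finset.sum_div]
  -- derivative of Z
  have hexp : ∀ y : O × L, HasDerivAt (fun θ => Real.exp (θ * T y) * r y * h y)
      (T y * (Real.exp (θ₀ * T y) * r y * h y)) θ₀ := by
    intro y
    have h1 : HasDerivAt (fun θ : ℝ => θ * T y) (T y) θ₀ := by
      simpa using (hasDerivAt_id θ₀).mul_const (T y)
    have h2 := (h1.exp.mul_const (r y)).mul_const (h y)
    exact h2.congr_deriv (by ring)
  have hZd : HasDerivAt Z (∑ z : O × L, T z * (Real.exp (θ₀ * T z) * r z * h z)) θ₀ :=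
    HasDerivAt.fun_sum fun z _ => hexp z
  have hgd : ∀ o, HasDerivAt (g o)
      (∑ l, T (o, l) * (Real.exp (θ₀ * T (o, l)) * r (o, l) * h (o, l))) θ₀ :=
    fun o => HasDerivAt.fun_sum fun l _ => hexp (o, l)
  -- rewrite the function
  have hfun : (fun θ : ℝ => ∑ o, ψ o * Real.log (ψ o / marg θ o))
      = fun θ : ℝ => ∑ o, ψ o * (Real.log (ψ o) - Real.log (g o θ) + Real.log (Z θ)) := by
    funext θ
    refine Finset.sum_congr rfl fun o _ => ?_
    rcases eq_or_lt_of_le (hψ0 o) with h0 | h0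
    · simp [← h0]
    · rw [hmargg, Real.log_div (ne_of_gt h0) (ne_of_gt (div_pos (hgpos o θ) (hZpos θ))),
        Real.log_div (ne_of_gt (hgpos o θ)) (ne_of_gt (hZpos θ))]
      ring_nf
  rw [hfun]
  have hd : HasDerivAt
      (fun θ : ℝ => ∑ o, ψ o * (Real.log (ψ o) - Real.log (g o θ) + Real.log (Z θ)))
      (∑ o, ψ o * (0 - (∑ l, T (o, l) * (Real.exp (θ₀ * T (o, l)) * r (o, l) * h (o, l))) / g o θ₀
        + (∑ z : O × L, T z * (Real.exp (θ₀ * T z) * r z * h z)) / Z θ₀)) θ₀ := by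
    refine HasDerivAt.fun_sum fun o _ => ?_
    exact (((hasDerivAt_const θ₀ (Real.log (ψ o))).sub
      ((hgd o).log (ne_of_gt (hgpos o θ₀)))).add (hZd.log (ne_of_gt (hZpos θ₀)))).const_mul (ψ o)
  convert hd using 1
  -- identify the derivative value
  have hZ0 := ne_of_gt (hZpos θ₀)
  have e1 : (∑ y : O × L, pi_ θ₀ y * T y)
      = (∑ z : O × L, T z * (Real.exp (θ₀ * T z) * r z * h z)) / Z θ₀ := by
    rw [Finset.sum_div]
    refine Finset.sum_congr rfl fun y _ => ?_
    rw [hpi]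
    show _ / Z θ₀ * _ = _
    field_simp
  have e2 : ∀ o, (∑ l, (pi_ θ₀ (o, l) / marg θ₀ o) * T (o, l))
      = (∑ l, T (o, l) * (Real.exp (θ₀ * T (o, l)) * r (o, l) * h (o, l))) / g o θ₀ := by
    intro o
    rw [Finset.sum_div]
    refine Finset.sum_congr rfl fun l _ => ?_
    rw [hpi, hmargg]
    have := ne_of_gt (hgpos o θ₀)
    show _ / Z θ₀ / _ * _ = _
    field_simp
  rw [e1]
  have : ∑ o, ψ o * (0 - (∑ l, T (o, l) * (Real.exp (θ₀ * T (o, l)) * r (o, l) * h (o, l))) / g o θ₀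
        + (∑ z : O × L, T z * (Real.exp (θ₀ * T z) * r z * h z)) / Z θ₀)
      = (∑ o, ψ o) * ((∑ z : O × L, T z * (Real.exp (θ₀ * T z) * r z * h z)) / Z θ₀)
        - ∑ o, ψ o * ((∑ l, T (o, l) * (Real.exp (θ₀ * T (o, l)) * r (o, l) * h (o, l))) / g o θ₀) := by
    rw [Finset.sum_mul, ← Finset.sum_sub_distrib]
    refine Finset.sum_congr rfl fun o _ => ?_
    ring
  rw [this, hψ1, one_mul]
  congr 1
  exact Finset.sum_congr rfl fun o _ => by rw [e2 o]
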